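/- If γ : ℝ^d → ℝ is a variogram, then for every a > 0 the function ξ ↦ 1 − exp(−a·γ(ξ)) is also a variogram. -/

import Mathlib

open Finset Real

def IsVariogram {d : ℕ} (γ : (Fin d → ℝ) → ℝ) : Prop :=
  γ 0 = 0 ∧ (∀ ξ, γ (-ξ) = γ ξ) ∧
  ∀ (n : ℕ) (x : Fin n → (Fin d → ℝ)) (c : Fin n → ℝ),
    (∑ i, c i) = 0 → (∑ i, ∑ j, c i * c j * γ (x i - x j)) ≤ 0

def IsPosDef {d : ℕ} (f : (Fin d → ℝ) → ℝ) : Prop :=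
  ∀ (n : ℕ) (x : Fin n → (Fin d → ℝ)) (c : Fin n → ℝ),
    0 ≤ ∑ i, ∑ j, c i * c j * f (x i - x j)

def IsPosDef1 (f : ℝ → ℝ) : Prop :=
  ∀ (n : ℕ) (x : Fin n → ℝ) (c : Fin n → ℝ),
    0 ≤ ∑ i, ∑ j, c i * c j * f (x i - x j)

def IsVariogram1 (γ : ℝ → ℝ) : Prop :=
  γ 0 = 0 ∧ (∀ x, γ (-x) = γ x) ∧
  ∀ (n : ℕ) (x : Fin n → ℝ) (c : Fin n → ℝ),
    (∑ i, c i) = 0 → (∑ i, ∑ j, c i * c j * γ (x i - x j)) ≤ 0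

noncomputable def ind {d : ℕ} : (Fin d → ℝ) → ℝ := fun ξ => if ξ = 0 then 0 else 1

section Aux

variable {n : ℕ}

def QF (K : Fin n → Fin n → ℝ) (c : Fin n → ℝ) : ℝ :=
  ∑ i, ∑ j, c i * c j * K i j

lemma qf_eq_dot (K : Fin n → Fin n → ℝ) (c : Fin n → ℝ) :
    QF K c = dotProduct c ((Matrix.of K).mulVec c) := by
  simp only [QF, dotProduct, Matrix.mulVec, Matrix.of_apply, Finset.mul_sum]
  congr 1; ext i; congr 1; ext j; ring

lemma posSemidef_of_qf {K : Fin n → Fin n → ℝ} (hsym : ∀ i j, K i j = K j i)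
    (h : ∀ c, 0 ≤ QF K c) : (Matrix.of K).PosSemidef := by
  refine Matrix.PosSemidef.of_dotProduct_mulVec_nonneg ?_ ?_
  · ext i j
    simp [Matrix.conjTranspose, hsym i j]
  · intro x
    have := h x
    rw [qf_eq_dot] at this
    simpa using this

open scoped MatrixOrder in
lemma qf_mul_nonneg {A B : Fin n → Fin n → ℝ}
    (hA : ∀ c, 0 ≤ QF A c)
    (hBs : ∀ i j, B i j = B j i) (hB : ∀ c, 0 ≤ QF B c)
    (c : Fin n → ℝ) : 0 ≤ QF (fun i j => A i j * B i j) c := by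
  have hBpsd : (Matrix.of B).PosSemidef := posSemidef_of_qf hBs hB
  set S := CFC.sqrt (Matrix.of B) with hS
  have hSsym : ∀ i j, S i j = S j i := by
    intro i j
    have h1 := (CFC.sqrt_nonneg (Matrix.of B)).1
    have : S.conjTranspose = S := by simpa [Matrix.IsHermitian] using h1
    calc S i j = S.conjTranspose j i := by simp [Matrix.conjTranspose_apply]
    _ = S j i := by rw [this]
  have hBdecomp : ∀ i j, B i j = ∑ k, S i k * S j k := by
    intro i j
    have hm := CFC.sqrt_mul_sqrt_self (Matrix.of B) hBpsd.nonneg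
    calc B i j = (S * S) i j := by rw [hm]; rfl
    _ = ∑ k, S i k * S k j := by rw [Matrix.mul_apply]
    _ = ∑ k, S i k * S j k := by simp_rw [hSsym]
  have key : QF (fun i j => A i j * B i j) c = ∑ k, QF A (fun i => c i * S i k) := by
    simp only [QF]
    calc ∑ i, ∑ j, c i * c j * (A i j * B i j)
        = ∑ i, ∑ j, ∑ k, (c i * S i k) * (c j * S j k) * A i j := by
          refine Finset.sum_congr rfl fun i _ => Finset.sum_congr rfl fun j _ => ?_
          simp only [hBdecomp, Finset.mul_sum]
          exact Finset.sum_congr rfl fun k _ => by ring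
      _ = ∑ i, ∑ k, ∑ j, (c i * S i k) * (c j * S j k) * A i j :=
          Finset.sum_congr rfl fun i _ => Finset.sum_comm
      _ = ∑ k, ∑ i, ∑ j, (c i * S i k) * (c j * S j k) * A i j := Finset.sum_comm
  rw [key]
  exact Finset.sum_nonneg fun k _ => hA _
end Aux

section Aux2
variable {n : ℕ}

lemma qf_one_nonneg (c : Fin n → ℝ) : 0 ≤ QF (fun _ _ => (1:ℝ)) c := by
  have : QF (fun _ _ => (1:ℝ)) c = (∑ i, c i) * (∑ j, c j) := by
    simp only [QF, mul_one, ← Finset.sum_mul, ← Finset.mul_sum]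
  rw [this]
  exact mul_self_nonneg _

lemma qf_pow_nonneg {K : Fin n → Fin n → ℝ} (hs : ∀ i j, K i j = K j i)
    (hK : ∀ c, 0 ≤ QF K c) (k : ℕ) (c : Fin n → ℝ) :
    0 ≤ QF (fun i j => K i j ^ k) c := by
  induction k generalizing c with
  | zero => simpa using qf_one_nonneg c
  | succ m ih =>
      have := qf_mul_nonneg (A := fun i j => K i j ^ m) ih hs hK c
      simpa [pow_succ] using this

lemma qf_exp_nonneg {K : Fin n → Fin n → ℝ} (hs : ∀ i j, K i j = K j i)
    (hK : ∀ c, 0 ≤ QF K c) (c : Fin n → ℝ) :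
    0 ≤ ∑ i, ∑ j, c i * c j * Real.exp (K i j) := by
  have hsumm : ∀ i j : Fin n, Summable (fun m : ℕ => c i * c j * (K i j ^ m / m.factorial)) :=
    fun i j => (Real.summable_pow_div_factorial _).mul_left _
  have hterm : ∀ i j : Fin n, c i * c j * Real.exp (K i j)
      = ∑' m : ℕ, c i * c j * (K i j ^ m / m.factorial) := by
    intro i j
    rw [Real.exp_eq_exp_ℝ, NormedSpace.exp_eq_tsum_div, tsum_mul_left]
  have hsum2 : ∀ i : Fin n, Summable (fun m : ℕ => ∑ j, c i * c j * (K i j ^ m / m.factorial)) :=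
    fun i => (hasSum_sum fun j _ => (hsumm i j).hasSum).summable
  calc (0:ℝ) ≤ ∑' m : ℕ, ∑ i, ∑ j, c i * c j * (K i j ^ m / m.factorial) := by
        refine tsum_nonneg fun m => ?_
        have : (∑ i, ∑ j, c i * c j * (K i j ^ m / m.factorial))
            = QF (fun i j => K i j ^ m) c / m.factorial := by
          simp only [QF, Finset.sum_div]
          exact Finset.sum_congr rfl fun i _ => Finset.sum_congr rfl fun j _ => by ring
        rw [this]
        exact div_nonneg (qf_pow_nonneg hs hK m c) (Nat.cast_nonneg _)
    _ = ∑ i, ∑ j, ∑' m : ℕ, c i * c j * (K i j ^ m / m.factorial) := by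
        rw [Summable.tsum_finsetSum fun i _ => hsum2 i]
        exact Finset.sum_congr rfl fun i _ => Summable.tsum_finsetSum fun j _ => hsumm i j
    _ = ∑ i, ∑ j, c i * c j * Real.exp (K i j) := by
        exact Finset.sum_congr rfl fun i _ => Finset.sum_congr rfl fun j _ => (hterm i j).symm

end Aux2

section Main
variable {n : ℕ}

lemma sum_sum_left (c f : Fin n → ℝ) :
    ∑ i, ∑ j, c i * c j * f i = (∑ i, c i * f i) * (∑ j, c j) := by
  rw [Finset.sum_mul]
  refine Finset.sum_congr rfl fun i _ => ?_
  rw [Finset.mul_sum]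
  exact Finset.sum_congr rfl fun j _ => by ring

lemma sum_sum_right (c f : Fin n → ℝ) :
    ∑ i, ∑ j, c i * c j * f j = (∑ i, c i) * (∑ j, c j * f j) := by
  rw [Finset.sum_mul]
  refine Finset.sum_congr rfl fun i _ => ?_
  rw [Finset.mul_sum]
  exact Finset.sum_congr rfl fun j _ => by ring

end Main


theorem stmt8 {d : ℕ} (γ : (Fin d → ℝ) → ℝ) (h : IsVariogram γ)
    (a : ℝ) (ha : 0 < a) :
    IsVariogram (fun ξ => 1 - Real.exp (-a * γ ξ)) := by
  obtain ⟨h0, hsym, hneg⟩ := h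
  refine ⟨by simp [h0], fun ξ => by simp [hsym], ?_⟩
  intro n x c hc
  set K : Fin n → Fin n → ℝ := fun i j => a * (γ (x i) + γ (x j) - γ (x i - x j)) with hK
  have hdiff : ∀ i j : Fin n, γ (x j - x i) = γ (x i - x j) := by
    intro i j
    rw [show x j - x i = -(x i - x j) from (neg_sub _ _).symm, hsym]
  have hKsym : ∀ i j, K i j = K j i := by
    intro i j
    simp only [hK, hdiff]
    ring
  have hKpsd : ∀ c', 0 ≤ QF K c' := by
    intro c'
    set s := ∑ i, c' i with hs
    set T := ∑ i, c' i * γ (x i) with hT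
    set D := ∑ i, ∑ j, c' i * c' j * γ (x i - x j) with hD
    have hext : D - s*T - s*T ≤ 0 := by
      have h1 : (∑ i, Fin.snoc c' (-s) i) = 0 := by
        rw [Fin.sum_univ_castSucc]
        simp [hs]
      have h2 := hneg (n+1) (Fin.snoc x (0 : Fin d → ℝ)) (Fin.snoc c' (-s)) h1
      simp only [Fin.sum_univ_castSucc, Fin.snoc_castSucc, Fin.snoc_last, sub_zero, zero_sub,
        hsym, h0, sub_self, mul_zero, add_zero, neg_mul, mul_neg, neg_neg,
        Finset.sum_add_distrib, Finset.sum_neg_distrib] at h2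
      have e1 : ∑ i, s * c' i * γ (x i) = s * T := by
        rw [hT, Finset.mul_sum]
        exact Finset.sum_congr rfl fun i _ => by ring
      have e2 : ∑ i, c' i * s * γ (x i) = s * T := by
        rw [hT, Finset.mul_sum]
        exact Finset.sum_congr rfl fun i _ => by ring
      rw [e1, e2, ← hD] at h2
      linarith
    have hQ : QF K c' = a * ((∑ i, c' i * γ (x i)) * s + s * (∑ j, c' j * γ (x j)) - D) := by
      have e : ∀ i j, c' i * c' j * K i j
          = a * ((c' i * c' j * γ (x i)) + (c' i * c' j * γ (x j)) - c' i * c' j * γ (x i - x j)) := by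
        intro i j; simp only [hK]; ring
      simp only [QF, e, mul_sub, mul_add, ← Finset.mul_sum, Finset.sum_add_distrib,
        Finset.sum_sub_distrib]
      rw [sum_sum_left, sum_sum_right, ← hs, ← hD]
    rw [hQ, ← hT]
    have : 0 ≤ T * s + s * T - D := by linarith
    exact mul_nonneg ha.le this
  have hexp := qf_exp_nonneg hKsym hKpsd (fun i => c i * Real.exp (-a * γ (x i)))
  have hrw : ∀ i j, c i * c j * Real.exp (-a * γ (x i - x j))
      = (c i * Real.exp (-a * γ (x i))) * (c j * Real.exp (-a * γ (x j))) * Real.exp (K i j) := by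
    intro i j
    rw [show (-a * γ (x i - x j)) = (-a * γ (x i)) + ((-a * γ (x j)) + K i j) from by
      simp only [hK]; ring, Real.exp_add, Real.exp_add]
    ring
  have hQpos : 0 ≤ ∑ i, ∑ j, c i * c j * Real.exp (-a * γ (x i - x j)) := by
    calc (0:ℝ) ≤ ∑ i, ∑ j, (c i * Real.exp (-a * γ (x i))) * (c j * Real.exp (-a * γ (x j)))
        * Real.exp (K i j) := hexp
      _ = _ := Finset.sum_congr rfl fun i _ => Finset.sum_congr rfl fun j _ => (hrw i j).symm
  have split : (∑ i, ∑ j, c i * c j * (1 - Real.exp (-a * γ (x i - x j))))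
      = (∑ i, c i) * (∑ j, c j) - ∑ i, ∑ j, c i * c j * Real.exp (-a * γ (x i - x j)) := by
    simp only [mul_sub, mul_one, Finset.sum_sub_distrib, ← Finset.sum_mul, ← Finset.mul_sum]
  simp only []
  rw [split, hc]
  linarith
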